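/- arXiv:2202.07340 — 4 statements merged into one kernel-verified Lean document; each statement's English description precedes it below -/
import Mathlib

section
/- Let A ∈ ℝ^{n_1×⋯×n_m} be an entrywise strictly positive tensor and let r_k ∈ Δ^{n_k} for k = 1,…,m. Then there exists a tensor B ∈ B(r_1,…,r_m) such that ||A − B||_1 ≤ 2 Σ_{k=1}^m ||r_k − r_k(A)||_1. -/
open Finset

namespace MOT

/-- The index set of a tensor with mode sizes `n 0, …, n (m-1)`. -/
abbrev Idx {m : ℕ} (n : Fin m → ℕ) := ∀ k : Fin m, Fin (n k)

/-- A real tensor of order `m` with mode sizes `n k`. -/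
abbrev Tensor {m : ℕ} (n : Fin m → ℕ) := Idx n → ℝ

/-- The `k`-th marginal of a tensor: `(r_k(X))_j = ∑_{I : i_k = j} X_I`. -/
noncomputable def marginal {m : ℕ} {n : Fin m → ℕ} (X : Tensor n) (k : Fin m)
    (j : Fin (n k)) : ℝ :=
  ∑ I : Idx n, if I k = j then X I else 0

/-- The entrywise ℓ¹-norm of a tensor. -/
noncomputable def tnorm1 {m : ℕ} {n : Fin m → ℕ} (X : Tensor n) : ℝ :=
  ∑ I : Idx n, |X I|

/-- The uniform norm (maximum absolute entry) of a real-valued family. -/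
noncomputable def supAbs {ι : Type*} (X : ι → ℝ) : ℝ := ⨆ i, |X i|

/-- The ℓ¹-norm of a vector. -/
noncomputable def vnorm1 {N : ℕ} (v : Fin N → ℝ) : ℝ := ∑ j, |v j|

/-- The Euclidean norm of a vector. -/
noncomputable def vnorm2 {N : ℕ} (v : Fin N → ℝ) : ℝ := Real.sqrt (∑ j, v j ^ 2)

/-- The Euclidean inner product of two vectors. -/
noncomputable def vinner {N : ℕ} (v w : Fin N → ℝ) : ℝ := ∑ j, v j * w j

/-- `v ∈ Δ^N`: entrywise strictly positive with entries summing to 1. -/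
def IsSimplex {N : ℕ} (v : Fin N → ℝ) : Prop := (∀ j, 0 < v j) ∧ ∑ j, v j = 1

/-- `P ∈ B(r_1,…,r_m)`: entrywise nonnegative with prescribed marginals. -/
def Feasible {m : ℕ} {n : Fin m → ℕ} (r : ∀ k : Fin m, Fin (n k) → ℝ)
    (P : Tensor n) : Prop :=
  (∀ I, 0 ≤ P I) ∧ ∀ k j, marginal P k j = r k j

/-- The entropy `H(P) = -∑_I P_I log P_I` (with `0 · log 0 = 0`). -/
noncomputable def entropy {m : ℕ} {n : Fin m → ℕ} (P : Tensor n) : ℝ :=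
  -∑ I : Idx n, P I * Real.log (P I)

/-- The inner product `⟨X, Y⟩ = ∑_I X_I Y_I` of two tensors. -/
noncomputable def tinner {m : ℕ} {n : Fin m → ℕ} (X Y : Tensor n) : ℝ :=
  ∑ I : Idx n, X I * Y I

/-- The entropic transport cost `V_C^η(P) = ⟨C, P⟩ − η H(P)`. -/
noncomputable def entCost {m : ℕ} {n : Fin m → ℕ} (C : Tensor n) (η : ℝ)
    (P : Tensor n) : ℝ :=
  tinner C P - η * entropy P

/-- `P` is a positive diagonal scaling of `K`. -/
def IsScaling {m : ℕ} {n : Fin m → ℕ} (K P : Tensor n) : Prop :=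
  ∃ β : ∀ k : Fin m, Fin (n k) → ℝ, ∀ I, P I = K I * ∏ k, Real.exp (β k (I k))

end MOT
namespace MOT

section Helpers
variable {m : ℕ} {n : Fin m → ℕ}


lemma marginal_sum_eq (X : Tensor n) (k : Fin m) :
    ∑ j, marginal X k j = ∑ I, X I := by
  unfold marginal
  rw [Finset.sum_comm]
  refine Finset.sum_congr rfl fun I _ => ?_
  simp

lemma sum_mul_comp (X : Tensor n) (k : Fin m) (g : Fin (n k) → ℝ) :
    ∑ I, X I * g (I k) = ∑ j, marginal X k j * g j := by
  unfold marginal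
  simp_rw [Finset.sum_mul]
  rw [Finset.sum_comm]
  refine Finset.sum_congr rfl fun I _ => ?_
  simp [ite_mul]

lemma sum_prod_eq (v : ∀ k : Fin m, Fin (n k) → ℝ) :
    ∑ I : Idx n, ∏ l, v l (I l) = ∏ l, ∑ j, v l j := by
  rw [Finset.prod_univ_sum]
  simp [Fintype.piFinset_univ]

lemma marginal_prodTensor (v : ∀ k : Fin m, Fin (n k) → ℝ) (k : Fin m) (j : Fin (n k)) :
    marginal (fun I => ∏ l, v l (I l)) k j
      = v k j * ∏ l ∈ Finset.univ.erase k, ∑ j', v l j' := by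
  classical
  set w : ∀ l : Fin m, Fin (n l) → ℝ := fun l j' =>
    if (⟨l, j'⟩ : Σ l : Fin m, Fin (n l)) = ⟨k, j⟩ then v l j'
    else if l = k then 0 else v l j' with hw
  have hwk : ∀ j', w k j' = if j' = j then v k j' else 0 := by
    intro j'
    simp only [hw, Sigma.mk.inj_iff, heq_eq_eq, true_and, if_pos rfl]
    by_cases h : j' = j <;> simp [h]
  have hwl : ∀ l, l ≠ k → w l = v l := by
    intro l hl
    funext j'
    simp [hw, Sigma.mk.inj_iff, hl]
  have key : ∀ I : Idx n, (∏ l, w l (I l)) = if I k = j then ∏ l, v l (I l) else 0 := by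
    intro I
    by_cases h : I k = j
    · rw [if_pos h]
      refine Finset.prod_congr rfl fun l _ => ?_
      by_cases hl : l = k
      · subst hl; rw [hwk, if_pos h]
      · rw [hwl l hl]
    · rw [if_neg h]
      apply Finset.prod_eq_zero (Finset.mem_univ k)
      rw [hwk, if_neg h]
  unfold marginal
  calc (∑ I : Idx n, if I k = j then ∏ l, v l (I l) else 0)
      = ∑ I : Idx n, ∏ l, w l (I l) :=
        (Finset.sum_congr rfl fun I _ => (key I)).symm
    _ = ∏ l, ∑ j', w l j' := sum_prod_eq w
    _ = (∑ j', w k j') * ∏ l ∈ Finset.univ.erase k, ∑ j', w l j' :=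
        (Finset.mul_prod_erase _ _ (Finset.mem_univ k)).symm
    _ = v k j * ∏ l ∈ Finset.univ.erase k, ∑ j', v l j' := by
        congr 1
        · simp [hwk]
        · exact Finset.prod_congr rfl fun l hl => by rw [hwl l (Finset.ne_of_mem_erase hl)]

lemma one_sub_prod_le {ι : Type*} (s : Finset ι) (f : ι → ℝ)
    (h0 : ∀ i ∈ s, 0 ≤ f i) (h1 : ∀ i ∈ s, f i ≤ 1) :
    1 - ∑ i ∈ s, (1 - f i) ≤ ∏ i ∈ s, f i := by
  induction s using Finset.cons_induction with
  | empty => simp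
  | cons a s ha ih =>
    rw [Finset.sum_cons, Finset.prod_cons]
    have hS : 0 ≤ ∑ i ∈ s, (1 - f i) := Finset.sum_nonneg fun i hi => by
      have := h1 i (Finset.mem_cons_of_mem hi); linarith
    have hP : 1 - ∑ i ∈ s, (1 - f i) ≤ ∏ i ∈ s, f i :=
      ih (fun i hi => h0 i (Finset.mem_cons_of_mem hi)) (fun i hi => h1 i (Finset.mem_cons_of_mem hi))
    have hP1 : ∏ i ∈ s, f i ≤ 1 := Finset.prod_le_one (fun i hi => h0 i (Finset.mem_cons_of_mem hi)) (fun i hi => h1 i (Finset.mem_cons_of_mem hi))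
    have ha0 := h0 a (Finset.mem_cons_self a s)
    have ha1 := h1 a (Finset.mem_cons_self a s)
    nlinarith [hP, hP1, mul_nonneg ha0 (by linarith : (0:ℝ) ≤ ∏ i ∈ s, f i - (1 - ∑ i ∈ s, (1 - f i))), mul_nonneg hS (by linarith : (0:ℝ) ≤ 1 - f a)]

end Helpers

/-- rounding, Lemma `lem:roundingproperties`: for every entrywise strictly
positive tensor `A` and marginals `r_k ∈ Δ^{n_k}` there is `B ∈ B(r_1,…,r_m)` with
`‖A − B‖₁ ≤ 2 ∑_k ‖r_k − r_k(A)‖₁`. -/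
theorem rounding_exists
    {m : ℕ} (hm : 2 ≤ m) {n : Fin m → ℕ}
    (A : Tensor n) (hA : ∀ I, 0 < A I)
    (r : ∀ k : Fin m, Fin (n k) → ℝ) (hr : ∀ k, IsSimplex (r k)) :
    ∃ B : Tensor n, Feasible r B ∧
      tnorm1 (fun I => A I - B I) ≤
        2 * ∑ k, vnorm1 (fun j => r k j - marginal A k j) := by
  classical
  by_cases hn : ∀ k, 0 < n k
  case neg =>
    push_neg at hn
    obtain ⟨k, hk⟩ := hn
    exfalso
    have h1 := (hr k).2
    haveI : IsEmpty (Fin (n k)) := by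
      rw [show n k = 0 by omega]; infer_instance
    simp at h1
  -- abbreviations
  set μ : ∀ k : Fin m, Fin (n k) → ℝ := fun k => marginal A k with hμdef
  have hμpos : ∀ k j, 0 < μ k j := by
    intro k j
    have hI0 : (Function.update (fun l : Fin m => (⟨0, hn l⟩ : Fin (n l))) k j) k = j :=
      Function.update_self _ _ _
    refine Finset.sum_pos' (fun I _ => ?_)
      ⟨Function.update (fun l : Fin m => (⟨0, hn l⟩ : Fin (n l))) k j, Finset.mem_univ _, ?_⟩
    · by_cases h : I k = j <;> simp [h, (hA I).le]
    · rw [if_pos hI0]; exact hA _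
  set f : ∀ k : Fin m, Fin (n k) → ℝ := fun k i => min 1 (r k i / μ k i) with hfdef
  have hf0 : ∀ k i, 0 ≤ f k i := fun k i =>
    le_min zero_le_one (div_pos ((hr k).1 i) (hμpos k i)).le
  have hf1 : ∀ k i, f k i ≤ 1 := fun k i => min_le_left _ _
  set X : Tensor n := fun I => A I * ∏ l, f l (I l) with hXdef
  have hX0 : ∀ I, 0 ≤ X I := fun I =>
    mul_nonneg (hA I).le (Finset.prod_nonneg fun l _ => hf0 l (I l))
  have hXA : ∀ I, X I ≤ A I := fun I => by
    have : ∏ l, f l (I l) ≤ 1 :=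
      Finset.prod_le_one (fun l _ => hf0 l (I l)) (fun l _ => hf1 l (I l))
    calc X I ≤ A I * 1 := mul_le_mul_of_nonneg_left this (hA I).le
      _ = A I := mul_one _
  have hXf : ∀ (k : Fin m) I, X I ≤ A I * f k (I k) := by
    intro k I
    have h1 : ∏ l, f l (I l) ≤ f k (I k) := by
      rw [← Finset.mul_prod_erase _ _ (Finset.mem_univ k)]
      calc f k (I k) * ∏ l ∈ univ.erase k, f l (I l)
          ≤ f k (I k) * 1 := mul_le_mul_of_nonneg_left
            (Finset.prod_le_one (fun l _ => hf0 l (I l)) (fun l _ => hf1 l (I l)))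
            (hf0 k (I k))
        _ = f k (I k) := mul_one _
    exact mul_le_mul_of_nonneg_left h1 (hA I).le
  have hmargX : ∀ k j, marginal X k j ≤ r k j := by
    intro k j
    have h1 : marginal X k j ≤ μ k j * f k j := by
      unfold marginal
      have step1 : ∀ I : Idx n, (if I k = j then X I else 0)
          ≤ (if I k = j then A I else 0) * f k j := by
        intro I
        by_cases h : I k = j
        · rw [if_pos h, if_pos h]
          have := hXf k I
          rw [h] at this
          exact this
        · rw [if_neg h, if_neg h, zero_mul]
      calc (∑ I : Idx n, if I k = j then X I else 0)
          ≤ ∑ I : Idx n, (if I k = j then A I else 0) * f k j :=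
            Finset.sum_le_sum fun I _ => step1 I
        _ = (∑ I : Idx n, if I k = j then A I else 0) * f k j := by
            rw [Finset.sum_mul]
        _ = μ k j * f k j := rfl
    refine h1.trans ?_
    calc μ k j * f k j ≤ μ k j * (r k j / μ k j) :=
          mul_le_mul_of_nonneg_left (min_le_right _ _) (hμpos k j).le
      _ = r k j := by rw [mul_comm, div_mul_cancel₀ _ (hμpos k j).ne']
  set err : ∀ k : Fin m, Fin (n k) → ℝ := fun k j => r k j - marginal X k j with herrdef
  have herr0 : ∀ k j, 0 ≤ err k j := fun k j => sub_nonneg.2 (hmargX k j)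
  set T : ℝ := ∑ I, X I with hTdef
  set s : ℝ := 1 - T with hsdef
  have herrsum : ∀ k, ∑ j, err k j = s := by
    intro k
    rw [herrdef, hsdef, hTdef]
    rw [Finset.sum_sub_distrib, (hr k).2, marginal_sum_eq]
  have k₀ : Fin m := ⟨0, by omega⟩
  have hs0 : 0 ≤ s := by
    rw [← herrsum k₀]
    exact Finset.sum_nonneg fun j _ => herr0 k₀ j
  have herr_zero : s = 0 → ∀ k j, err k j = 0 := by
    intro h k j
    have := (Finset.sum_eq_zero_iff_of_nonneg (fun j _ => herr0 k j)).1
      ((herrsum k).trans h)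
    exact this j (Finset.mem_univ j)
  set corr : Tensor n := fun I => (∏ l, err l (I l)) / s ^ (m - 1) with hcorrdef
  have hcorr0 : ∀ I, 0 ≤ corr I := fun I =>
    div_nonneg (Finset.prod_nonneg fun l _ => herr0 l (I l)) (pow_nonneg hs0 _)
  have hcardE : ∀ k : Fin m, (Finset.univ.erase k).card = m - 1 := by
    intro k
    rw [Finset.card_erase_of_mem (Finset.mem_univ k), Finset.card_univ, Fintype.card_fin]
  have hmargcorr : ∀ k j, marginal corr k j = err k j := by
    intro k j
    have h1 : marginal corr k j
        = (marginal (fun I => ∏ l, err l (I l)) k j) / s ^ (m - 1) := by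
      unfold marginal
      calc (∑ I : Idx n, if I k = j then corr I else 0)
          = ∑ I : Idx n, (if I k = j then (∏ l, err l (I l)) else 0) / s ^ (m - 1) := by
            refine Finset.sum_congr rfl fun I _ => ?_
            by_cases h : I k = j <;> simp [h, hcorrdef]
        _ = (∑ I : Idx n, if I k = j then (∏ l, err l (I l)) else 0) / s ^ (m - 1) := by
            rw [Finset.sum_div]
    rw [h1, marginal_prodTensor err k j]
    have h2 : ∏ l ∈ Finset.univ.erase k, ∑ j', err l j' = s ^ (m - 1) := by
      rw [Finset.prod_congr rfl fun l _ => herrsum l, Finset.prod_const, hcardE]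
    rw [h2]
    by_cases hsz : s = 0
    · rw [herr_zero hsz k j, zero_mul, zero_div]
    · exact mul_div_cancel_right₀ _ (pow_ne_zero _ hsz)
  have hcorrsum : ∑ I, corr I = s := by
    calc ∑ I, corr I = (∑ I : Idx n, ∏ l, err l (I l)) / s ^ (m - 1) := by
          rw [← Finset.sum_div]
      _ = (∏ l, ∑ j, err l j) / s ^ (m - 1) := by rw [sum_prod_eq]
      _ = s ^ m / s ^ (m - 1) := by
          rw [Finset.prod_congr rfl fun l _ => herrsum l, Finset.prod_const,
            Finset.card_univ, Fintype.card_fin]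
      _ = s := by
          by_cases hsz : s = 0
          · rw [hsz, zero_pow (by omega : m ≠ 0), zero_div]
          · rw [show s ^ m = s ^ (m - 1) * s from by rw [← pow_succ]; congr 1; omega,
              mul_div_cancel_left₀ _ (pow_ne_zero _ hsz)]
  refine ⟨fun I => X I + corr I, ⟨fun I => add_nonneg (hX0 I) (hcorr0 I), ?_⟩, ?_⟩
  · intro k j
    have hadd : marginal (fun I => X I + corr I) k j
        = marginal X k j + marginal corr k j := by
      unfold marginal
      rw [← Finset.sum_add_distrib]
      refine Finset.sum_congr rfl fun I _ => ?_
      by_cases h : I k = j <;> simp [h]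
    rw [hadd, hmargcorr]
    rw [herrdef]
    ring
  -- the quantitative bound
  set a : ℝ := ∑ I, A I with hadef
  have hbound1 : tnorm1 (fun I => A I - (X I + corr I)) ≤ (a - T) + s := by
    unfold tnorm1
    calc ∑ I : Idx n, |A I - (X I + corr I)|
        ≤ ∑ I : Idx n, ((A I - X I) + corr I) := by
          refine Finset.sum_le_sum fun I _ => ?_
          have h1 := hXA I
          have h2 := hcorr0 I
          rw [abs_le]
          constructor <;> [linarith; linarith]
      _ = (a - T) + s := by
          rw [Finset.sum_add_distrib, Finset.sum_sub_distrib, hcorrsum, hadef, hTdef]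
  have haT : a - T ≤ ∑ l, ∑ j, μ l j * (1 - f l j) := by
    have h1 : a - T = ∑ I : Idx n, A I * (1 - ∏ l, f l (I l)) := by
      rw [hadef, hTdef, ← Finset.sum_sub_distrib]
      refine Finset.sum_congr rfl fun I _ => ?_
      rw [hXdef]
      ring
    rw [h1]
    calc ∑ I : Idx n, A I * (1 - ∏ l, f l (I l))
        ≤ ∑ I : Idx n, A I * ∑ l, (1 - f l (I l)) := by
          refine Finset.sum_le_sum fun I _ => ?_
          refine mul_le_mul_of_nonneg_left ?_ (hA I).le
          have := one_sub_prod_le Finset.univ (fun l => f l (I l))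
            (fun l _ => hf0 l (I l)) (fun l _ => hf1 l (I l))
          linarith
      _ = ∑ l, ∑ I : Idx n, A I * (1 - f l (I l)) := by
          rw [Finset.sum_comm]
          exact Finset.sum_congr rfl fun I _ => Finset.mul_sum _ _ _
      _ = ∑ l, ∑ j, μ l j * (1 - f l j) := by
          refine Finset.sum_congr rfl fun l _ => ?_
          exact sum_mul_comp A l (fun i => 1 - f l i)
  have h2D : ∀ (l : Fin m) j, 2 * (μ l j * (1 - f l j))
      = |r l j - μ l j| + (μ l j - r l j) := by
    intro l j
    have hμp := hμpos l j
    rcases le_total (r l j) (μ l j) with h | h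
    · have hf : f l j = r l j / μ l j := min_eq_right ((div_le_one hμp).2 h)
      rw [hf, abs_of_nonpos (by linarith : r l j - μ l j ≤ 0)]
      field_simp
      ring
    · have hf : f l j = 1 := min_eq_left ((one_le_div hμp).2 h)
      rw [hf, abs_of_nonneg (by linarith : 0 ≤ r l j - μ l j)]
      ring
  have hsum_mu : ∀ l, ∑ j, μ l j = a := fun l => marginal_sum_eq A l
  set E : ℝ := ∑ l, ∑ j, |r l j - μ l j| with hEdef
  have hDE : 2 * (∑ l, ∑ j, μ l j * (1 - f l j)) = E + (m : ℝ) * (a - 1) := by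
    rw [Finset.mul_sum]
    have : ∀ l : Fin m, 2 * ∑ j, μ l j * (1 - f l j)
        = (∑ j, |r l j - μ l j|) + (a - 1) := by
      intro l
      rw [Finset.mul_sum]
      rw [Finset.sum_congr rfl fun j _ => h2D l j, Finset.sum_add_distrib]
      congr 1
      rw [Finset.sum_sub_distrib, hsum_mu l, (hr l).2]
    rw [Finset.sum_congr rfl fun l _ => this l, Finset.sum_add_distrib, hEdef,
      Finset.sum_const, Finset.card_univ, Fintype.card_fin, nsmul_eq_mul]
  have hεa : ∀ l : Fin m, a - 1 ≤ ∑ j, |r l j - μ l j| := by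
    intro l
    have h1 : a - 1 = ∑ j, (μ l j - r l j) := by
      rw [Finset.sum_sub_distrib, hsum_mu l, (hr l).2]
    rw [h1]
    exact Finset.sum_le_sum fun j _ => by
      rw [abs_sub_comm]; exact le_abs_self _
  have hma : ((m : ℝ) - 1) * (a - 1) ≤ E := by
    have h1 : ∑ l ∈ Finset.univ.erase k₀, (a - 1)
        ≤ ∑ l ∈ Finset.univ.erase k₀, ∑ j, |r l j - μ l j| :=
      Finset.sum_le_sum fun l _ => hεa l
    have h2 : ∑ l ∈ Finset.univ.erase k₀, ∑ j, |r l j - μ l j| ≤ E := by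
      rw [hEdef]
      refine Finset.sum_le_sum_of_subset_of_nonneg (Finset.subset_univ _) ?_
      intro l _ _
      exact Finset.sum_nonneg fun j _ => abs_nonneg _
    have h3 : ∑ l ∈ Finset.univ.erase k₀, (a - 1) = ((m:ℝ) - 1) * (a - 1) := by
      rw [Finset.sum_const, hcardE, nsmul_eq_mul]
      congr 1
      have : (1:ℕ) ≤ m := by omega
      push_cast [Nat.cast_sub this]
      ring
    linarith
  have hgoalR : ∑ k, vnorm1 (fun j => r k j - marginal A k j) = E := by
    rw [hEdef]
    exact Finset.sum_congr rfl fun l _ => rfl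
  rw [hgoalR]
  have hs' : s = 1 - T := hsdef
  calc tnorm1 (fun I => A I - (X I + corr I)) ≤ (a - T) + s := hbound1
    _ = 2 * (a - T) + (1 - a) := by rw [hs']; ring
    _ ≤ 2 * (∑ l, ∑ j, μ l j * (1 - f l j)) + (1 - a) := by linarith
    _ = E + ((m:ℝ) - 1) * (a - 1) := by rw [hDE]; ring
    _ ≤ E + E := by linarith
    _ = 2 * E := by ring

end MOT
end

section
/- Let P ∈ ℝ^{n_1×⋯×n_m} be an entrywise nonnegative tensor with ||P||_1 = 1, let r_k ∈ Δ^{n_k} for k = 1,…,m, and let ε > 0. If for every k ∈ {1,…,m} one has || r_k(P) − (⟨r_k, r_k(P)⟩ / ||r_k||_2²) · r_k ||_1 < ε / (2m), then Σ_{k=1}^m ||r_k(P) − r_k||_1 ≤ ε. -/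
open Finset

namespace MOT

/-- last claim of Theorem `thm:SinkhornStops`: if for every `k`
`‖ r_k(P) − (⟨r_k, r_k(P)⟩/‖r_k‖₂²) r_k ‖₁ < ε/(2m)` and `‖P‖₁ = 1`,
then `∑_k ‖r_k(P) − r_k‖₁ ≤ ε`. -/
theorem friedland_criterion_implies_stopping
    {m : ℕ} (hm : 2 ≤ m) {n : Fin m → ℕ}
    (P : Tensor n) (hP : ∀ I, 0 ≤ P I) (hP1 : tnorm1 P = 1)
    (r : ∀ k : Fin m, Fin (n k) → ℝ) (hr : ∀ k, IsSimplex (r k))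
    (ε : ℝ) (hε : 0 < ε)
    (h : ∀ k : Fin m,
      vnorm1 (fun j => marginal P k j -
        (vinner (r k) (fun j' => marginal P k j') / (vnorm2 (r k)) ^ 2) * r k j)
      < ε / (2 * m)) :
    ∑ k, vnorm1 (fun j => marginal P k j - r k j) ≤ ε := by
  have hm0 : (0:ℝ) < m := by positivity
  -- per-mode bound
  have key : ∀ k : Fin m, vnorm1 (fun j => marginal P k j - r k j) ≤ ε / m := by
    intro k
    set v : Fin (n k) → ℝ := fun j => marginal P k j with hv
    set lam : ℝ := vinner (r k) (fun j' => marginal P k j') / (vnorm2 (r k)) ^ 2 with hlam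
    have hsumv : ∑ j, v j = 1 := by
      have : ∑ j, v j = ∑ I : Idx n, P I := by
        simp only [hv, marginal]
        rw [Finset.sum_comm]
        refine Finset.sum_congr rfl fun I _ => ?_
        simp
      rw [this, ← hP1, tnorm1]
      exact Finset.sum_congr rfl fun I _ => (abs_of_nonneg (hP I)).symm
    have hsumr : ∑ j, r k j = 1 := (hr k).2
    have hb : vnorm1 (fun j => v j - lam * r k j) < ε / (2 * m) := h k
    have h1 : |1 - lam| ≤ vnorm1 (fun j => v j - lam * r k j) := by
      have : 1 - lam = ∑ j, (v j - lam * r k j) := by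
        rw [Finset.sum_sub_distrib, hsumv, ← Finset.mul_sum, hsumr, mul_one]
      rw [this, vnorm1]
      exact Finset.abs_sum_le_sum_abs _ _
    have h2 : vnorm1 (fun j => v j - r k j)
        ≤ vnorm1 (fun j => v j - lam * r k j) + |1 - lam| := by
      rw [vnorm1, vnorm1]
      calc ∑ j, |v j - r k j| ≤ ∑ j, (|v j - lam * r k j| + |1 - lam| * r k j) := by
            refine Finset.sum_le_sum fun j _ => ?_
            have : v j - r k j = (v j - lam * r k j) + (lam - 1) * r k j := by ring
            rw [this]
            refine (abs_add_le _ _).trans ?_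
            rw [abs_mul, abs_of_pos ((hr k).1 j)]
            have : |lam - 1| = |1 - lam| := abs_sub_comm _ _
            rw [this]
        _ = (∑ j, |v j - lam * r k j|) + |1 - lam| := by
            rw [Finset.sum_add_distrib, ← Finset.mul_sum, hsumr, mul_one]
    have : vnorm1 (fun j => v j - r k j) < ε / (2*m) + ε / (2*m) :=
      h2.trans_lt (by linarith [h1.trans hb.le])
    have heq : ε / (2*m) + ε / (2*m) = ε / m := by field_simp; ring
    linarith [heq ▸ this]
  calc ∑ k, vnorm1 (fun j => marginal P k j - r k j) ≤ ∑ _k : Fin m, ε / m :=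
        Finset.sum_le_sum fun k _ => key k
    _ = m * (ε / m) := by rw [Finset.sum_const, Finset.card_univ, Fintype.card_fin]; ring
    _ = ε := by field_simp

end MOT
end

section
/- Let m ≥ 2, n_k ≥ 2 for all k, η > 0, and r_k ∈ Δ^{n_k} for k = 1,…,m. Let C, C̃ ∈ ℝ^{n_1×⋯×n_m} with C entrywise nonnegative and ||C − C̃||_∞ ≤ η ε_log for some 0 < ε_log ≤ 1. Let P be a minimizer of V_C^η over B(r_1,…,r_m) and let P̃ be a minimizer of V_{C̃}^η over B(r_1,…,r_m). Then ||P − P̃||_1 ≤ ε_log and |V_C^η(P) − V_C^η(P̃)| ≤ ε_log ||C||_∞ + η · ( ε_log · log(2/ε_log) + (ε_log/2) · log((Π_{k=1}^m n_k) − 1) ). -/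
open Finset

namespace MOT

open Real

/-- derivative helper for F -/
noncomputable def Fa (u : ℝ) : ℝ := u * Real.log u - u + 1 - 3*(u-1)^2/(2*(u+2))
noncomputable def Fa' (u : ℝ) : ℝ := Real.log u - 3/2*((u-1)*(u+5))/(u+2)^2
noncomputable def Fa'' (u : ℝ) : ℝ := 1/u - 27/(u+2)^3

lemma hasDerivAt_Fa {u : ℝ} (hu : 0 < u) : HasDerivAt Fa (Fa' u) u := by
  have h2 : (u+2) ≠ 0 := by positivity
  have h1 : HasDerivAt (fun x : ℝ => x * Real.log x) (Real.log u + 1) u :=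
    Real.hasDerivAt_mul_log hu.ne'
  have hnum : HasDerivAt (fun x : ℝ => 3*(x-1)^2) (6*(u-1)) u := by
    have h : HasDerivAt (fun x : ℝ => (x-1)^2) (2*(u-1)) u := by
      simpa using ((hasDerivAt_id u).sub_const 1).fun_pow 2
    convert h.const_mul 3 using 1
    · rfl
    · rfl
    ring
  have hden : HasDerivAt (fun x : ℝ => 2*(x+2)) 2 u := by
    simpa using ((hasDerivAt_id u).add_const 2).const_mul 2
  have hdiv : HasDerivAt (fun x : ℝ => 3*(x-1)^2/(2*(x+2)))
      ((6*(u-1)*(2*(u+2)) - 3*(u-1)^2*2)/(2*(u+2))^2) u := by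
    exact hnum.div hden (by positivity)
  have := (h1.sub (hasDerivAt_id u)).add_const 1 |>.sub hdiv
  convert this using 1
  · rfl
  · rfl
  · rfl
  unfold Fa'
  field_simp
  ring

lemma hasDerivAt_Fa' {u : ℝ} (hu : 0 < u) : HasDerivAt Fa' (Fa'' u) u := by
  have h2 : (u+2) ≠ 0 := by positivity
  have h1 : HasDerivAt Real.log (1/u) u := by simpa [one_div] using Real.hasDerivAt_log hu.ne'
  have hnum : HasDerivAt (fun x : ℝ => 3/2*((x-1)*(x+5))) (3/2*(2*u+4)) u := by
    have : HasDerivAt (fun x : ℝ => (x-1)*(x+5)) ((1)*(u+5) + (u-1)*1) u :=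
      (((hasDerivAt_id u).sub_const 1)).mul ((hasDerivAt_id u).add_const 5)
    convert this.const_mul (3/2 : ℝ) using 1; rfl; rfl; ring
  have hden : HasDerivAt (fun x : ℝ => (x+2)^2) (2*(u+2)) u := by
    simpa using ((hasDerivAt_id u).add_const 2).fun_pow 2
  have hdiv : HasDerivAt (fun x : ℝ => 3/2*((x-1)*(x+5))/(x+2)^2)
      ((3/2*(2*u+4)*(u+2)^2 - 3/2*((u-1)*(u+5))*(2*(u+2)))/((u+2)^2)^2) u :=
    hnum.div hden (by positivity)
  have := h1.sub hdiv
  convert this using 1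
  · rfl
  · rfl
  · rfl
  unfold Fa''
  field_simp
  ring

lemma Fa_nonneg {u : ℝ} (hu : 0 < u) : 0 ≤ Fa u := by
  have hFa'mono : MonotoneOn Fa' (Set.Ioi (0:ℝ)) := by
    refine monotoneOn_of_deriv_nonneg (convex_Ioi 0) ?_ ?_ ?_
    · exact fun x hx => (hasDerivAt_Fa' hx).continuousAt.continuousWithinAt
    · intro x hx
      rw [interior_Ioi] at hx
      exact (hasDerivAt_Fa' hx).differentiableAt.differentiableWithinAt
    · intro x hx
      rw [interior_Ioi] at hx
      have hx' : (0:ℝ) < x := hx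
      rw [(hasDerivAt_Fa' hx').deriv]
      unfold Fa''
      rw [sub_nonneg, div_le_div_iff₀ (by positivity : (0:ℝ) < (x+2)^3) hx']
      nlinarith [sq_nonneg (x-1), hx'.le, mul_nonneg (mul_nonneg (sub_nonneg.2 (le_of_lt hx')) hx'.le) hx'.le, sq_nonneg x, mul_nonneg hx'.le hx'.le]
  have hFa'1 : Fa' 1 = 0 := by unfold Fa'; norm_num
  have hFa1 : Fa 1 = 0 := by unfold Fa; norm_num
  rcases le_total 1 u with h | h
  · -- monotone on Ici 1
    have hmono : MonotoneOn Fa (Set.Ici (1:ℝ)) := by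
      refine monotoneOn_of_deriv_nonneg (convex_Ici 1) ?_ ?_ ?_
      · exact fun x hx => (hasDerivAt_Fa (by linarith [hx.out] : (0:ℝ) < x)).continuousAt.continuousWithinAt
      · intro x hx
        rw [interior_Ici] at hx
        exact (hasDerivAt_Fa (by linarith [hx.out] : (0:ℝ) < x)).differentiableAt.differentiableWithinAt
      · intro x hx
        rw [interior_Ici] at hx
        have hx1 : (1:ℝ) < x := hx
        rw [(hasDerivAt_Fa (by linarith)).deriv]
        have := hFa'mono (by norm_num : (1:ℝ) ∈ Set.Ioi (0:ℝ)) (by simp; linarith : x ∈ Set.Ioi (0:ℝ)) hx1.le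
        linarith [hFa'1 ▸ this]
    have := hmono (Set.self_mem_Ici) (by exact h) h
    linarith [hFa1 ▸ this]
  · -- antitone on Ioc 0 1
    have hanti : AntitoneOn Fa (Set.Ioc (0:ℝ) 1) := by
      refine antitoneOn_of_deriv_nonpos (convex_Ioc 0 1) ?_ ?_ ?_
      · exact fun x hx => (hasDerivAt_Fa hx.1).continuousAt.continuousWithinAt
      · intro x hx
        rw [interior_Ioc] at hx
        exact (hasDerivAt_Fa hx.1).differentiableAt.differentiableWithinAt
      · intro x hx
        rw [interior_Ioc] at hx
        rw [(hasDerivAt_Fa hx.1).deriv]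
        have := hFa'mono (Set.mem_Ioi.2 hx.1) (by norm_num : (1:ℝ) ∈ Set.Ioi (0:ℝ)) hx.2.le
        linarith [hFa'1 ▸ this]
    have := hanti (Set.mem_Ioc.2 ⟨hu, h⟩) (Set.mem_Ioc.2 ⟨one_pos, le_refl 1⟩) h
    linarith [hFa1 ▸ this]

noncomputable def Wf (x : ℝ) : ℝ := (1-x) * Real.log (1-x) - x * Real.log x

lemma hasDerivAt_Wf {x : ℝ} (hx0 : 0 < x) (hx1 : x < 1) :
    HasDerivAt Wf (-(Real.log (1-x) + 1) - (Real.log x + 1)) x := by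
  have h1 : HasDerivAt (fun y : ℝ => (1-y) * Real.log (1-y)) (-(Real.log (1-x) + 1)) x := by
    have hcomp : HasDerivAt (fun y : ℝ => (fun z : ℝ => z * Real.log z) (1-y))
        ((Real.log (1-x) + 1) * (-1)) x := by
      exact (Real.hasDerivAt_mul_log (by linarith : (1:ℝ)-x ≠ 0)).comp x
        (((hasDerivAt_id x).const_sub 1))
    simpa [mul_comm] using hcomp
  exact h1.sub (Real.hasDerivAt_mul_log hx0.ne')

lemma Wf_cont : Continuous Wf := by
  unfold Wf
  exact ((Real.continuous_mul_log.comp (continuous_const.sub continuous_id)).sub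
    Real.continuous_mul_log)

lemma Wf_nonneg {x : ℝ} (hx0 : 0 ≤ x) (hx1 : x ≤ 1/2) : 0 ≤ Wf x := by
  rcases eq_or_lt_of_le hx0 with h | hx0'
  · simp [Wf, ← h]
  have hW0 : Wf 0 = 0 := by simp [Wf]
  have hWhalf : Wf (1/2) = 0 := by unfold Wf; norm_num
  have hderiv : ∀ y : ℝ, 0 < y → y < 1 →
      deriv Wf y = -(Real.log (1-y) + 1) - (Real.log y + 1) :=
    fun y h1 h2 => (hasDerivAt_Wf h1 h2).deriv
  rcases le_or_gt (x*(1-x)) (Real.exp (-2)) with hcase | hcase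
  · -- monotone on [0, x]
    have hmono : MonotoneOn Wf (Set.Icc 0 x) := by
      refine monotoneOn_of_deriv_nonneg (convex_Icc 0 x) Wf_cont.continuousOn ?_ ?_
      · intro y hy
        rw [interior_Icc] at hy
        exact (hasDerivAt_Wf hy.1 (by linarith [hy.2])).differentiableAt.differentiableWithinAt
      · intro y hy
        rw [interior_Icc] at hy
        have hy0 : 0 < y := hy.1
        have hy1 : y < 1 := by linarith [hy.2]
        rw [hderiv y hy0 hy1]
        have hyx : y*(1-y) ≤ x*(1-x) := by nlinarith [hy.2, hy.1]
        have hpos : 0 < y*(1-y) := by nlinarith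
        have : Real.log (y*(1-y)) ≤ -2 := by
          calc Real.log (y*(1-y)) ≤ Real.log (Real.exp (-2)) :=
                Real.log_le_log hpos (le_trans hyx hcase)
            _ = -2 := Real.log_exp _
        rw [Real.log_mul hy0.ne' (by linarith : (1:ℝ)-y ≠ 0)] at this
        linarith
    have := hmono (Set.mem_Icc.2 ⟨le_refl 0, hx0⟩) (Set.mem_Icc.2 ⟨hx0, le_refl x⟩) hx0
    linarith [hW0 ▸ this]
  · -- antitone on [x, 1/2]
    have hanti : AntitoneOn Wf (Set.Icc x (1/2)) := by
      refine antitoneOn_of_deriv_nonpos (convex_Icc x (1/2)) Wf_cont.continuousOn ?_ ?_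
      · intro y hy
        rw [interior_Icc] at hy
        exact (hasDerivAt_Wf (lt_trans hx0' hy.1) (by linarith [hy.2])).differentiableAt.differentiableWithinAt
      · intro y hy
        rw [interior_Icc] at hy
        have hy0 : 0 < y := lt_trans hx0' hy.1
        have hy1 : y < 1 := by linarith [hy.2]
        rw [hderiv y hy0 hy1]
        have hyx : x*(1-x) ≤ y*(1-y) := by nlinarith [hy.1, hy.2]
        have : -2 ≤ Real.log (y*(1-y)) := by
          calc (-2:ℝ) = Real.log (Real.exp (-2)) := (Real.log_exp _).symm
            _ ≤ Real.log (y*(1-y)) := Real.log_le_log (Real.exp_pos _) (le_trans hcase.le hyx)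
        rw [Real.log_mul hy0.ne' (by linarith : (1:ℝ)-y ≠ 0)] at this
        linarith
    have := hanti (Set.mem_Icc.2 ⟨le_refl x, hx1⟩) (Set.mem_Icc.2 ⟨hx1, le_refl _⟩) hx1
    linarith [hWhalf ▸ this]

lemma mul_log_le_half {x : ℝ} (hx0 : 0 ≤ x) (hx1 : x ≤ 1/2) :
    x * Real.log x ≤ (1-x) * Real.log (1-x) := by
  have := Wf_nonneg hx0 hx1
  unfold Wf at this
  linarith

/-- Pointwise Pinsker bound. -/
lemma pointwise_kl {a b : ℝ} (ha : 0 ≤ a) (hb : 0 ≤ b) (hsupp : b = 0 → a = 0) :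
    a - b + 3/2 * ((a-b)^2/(a+2*b)) ≤ a * Real.log a - a * Real.log b := by
  rcases eq_or_lt_of_le hb with hb0 | hb0
  · have ha0 : a = 0 := hsupp hb0.symm
    simp [ha0, ← hb0]
  rcases eq_or_lt_of_le ha with ha0 | ha0
  · rw [← ha0]
    have : (0 - b)^2/(0+2*b) = b/2 := by
      field_simp
      ring
    rw [this]
    simp
    linarith
  · have hab : 0 < a + 2*b := by linarith
    have hu : 0 < a/b := div_pos ha0 hb0
    have h1 := Fa_nonneg hu
    unfold Fa at h1
    have hlog : Real.log (a/b) = Real.log a - Real.log b := Real.log_div ha0.ne' hb0.ne'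
    rw [hlog] at h1
    have h2 := mul_le_mul_of_nonneg_left (sub_nonneg.mp h1) hb0.le
    have e1 : b * (a/b * (Real.log a - Real.log b) - a/b + 1)
        = a * Real.log a - a * Real.log b - a + b := by
      field_simp
    have e2 : b * (3*(a/b-1)^2/(2*(a/b+2))) = 3/2 * ((a-b)^2/(a+2*b)) := by
      have hne : a/b + 2 ≠ 0 := by positivity
      field_simp
    rw [e1, e2] at h2
    linarith

/-- Log-sum inequality over a finset. -/
lemma log_sum {ι : Type*} (s : Finset ι) (a c : ι → ℝ)
    (ha : ∀ i ∈ s, 0 ≤ a i) (hc : ∀ i ∈ s, 0 ≤ c i)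
    (hsupp : ∀ i ∈ s, c i = 0 → a i = 0) :
    (∑ i ∈ s, a i) * Real.log ((∑ i ∈ s, a i)/(∑ i ∈ s, c i)) ≤
      ∑ i ∈ s, (a i * Real.log (a i) - a i * Real.log (c i)) := by
  set A := ∑ i ∈ s, a i with hA
  set C := ∑ i ∈ s, c i with hC
  rcases eq_or_lt_of_le (Finset.sum_nonneg ha) with hA0 | hA0
  · rw [← hA] at hA0
    have hz : ∀ i ∈ s, a i = 0 := by
      intro i hi
      exact (Finset.sum_eq_zero_iff_of_nonneg ha).mp hA0.symm i hi
    rw [← hA0]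
    simp only [zero_mul]
    refine Finset.sum_nonneg ?_ |>.trans_eq' (by ring)
    intro i hi
    rw [hz i hi]
    ring_nf
    simp
  · rw [← hA] at hA0
    -- get C > 0
    obtain ⟨i₀, hi₀s, hi₀⟩ : ∃ i ∈ s, 0 < a i := by
      by_contra hcon
      push_neg at hcon
      have : A ≤ 0 := Finset.sum_nonpos hcon
      linarith
    have hci₀ : 0 < c i₀ := by
      rcases eq_or_lt_of_le (hc i₀ hi₀s) with h | h
      · exact absurd (hsupp i₀ hi₀s h.symm) (by linarith)
      · exact h
    have hC0 : 0 < C := lt_of_lt_of_le hci₀ (Finset.single_le_sum hc hi₀s)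
    -- pointwise
    have hpt : ∀ i ∈ s, a i * Real.log (A/C) + (a i - c i * (A/C)) ≤
        a i * Real.log (a i) - a i * Real.log (c i) := by
      intro i hi
      rcases eq_or_lt_of_le (ha i hi) with h0 | h0
      · rw [← h0]
        simp only [zero_mul, zero_sub, zero_add]
        have : 0 ≤ c i * (A/C) := mul_nonneg (hc i hi) (div_nonneg hA0.le hC0.le)
        linarith
      · have hci : 0 < c i := by
          rcases eq_or_lt_of_le (hc i hi) with h | h
          · exact absurd (hsupp i hi h.symm) (by linarith)
          · exact h
        have hx : 0 < (a i * C)/(c i * A) := by positivity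
        have := Real.one_sub_inv_le_log_of_pos hx
        have hlogx : Real.log ((a i * C)/(c i * A)) =
            Real.log (a i) - Real.log (c i) - Real.log (A/C) := by
          rw [Real.log_div (by positivity) (by positivity), Real.log_mul h0.ne' hC0.ne',
            Real.log_mul hci.ne' hA0.ne', Real.log_div hA0.ne' hC0.ne']
          ring
        rw [hlogx] at this
        have hinv : ((a i * C)/(c i * A))⁻¹ = (c i * A)/(a i * C) := by
          rw [inv_div]
        rw [hinv] at this
        have := mul_le_mul_of_nonneg_left this h0.le
        calc a i * Real.log (A/C) + (a i - c i * (A/C))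
            = a i * (1 - (c i * A)/(a i * C)) + a i * Real.log (A/C) := by
              field_simp
              ring
          _ ≤ a i * (Real.log (a i) - Real.log (c i) - Real.log (A/C)) + a i * Real.log (A/C) := by
              linarith
          _ = a i * Real.log (a i) - a i * Real.log (c i) := by ring
    calc A * Real.log (A/C)
        = ∑ i ∈ s, (a i * Real.log (A/C) + (a i - c i * (A/C))) := by
          rw [Finset.sum_add_distrib, Finset.sum_sub_distrib, ← Finset.sum_mul, ← Finset.sum_mul,
            ← hA, ← hC]
          field_simp
          ring
      _ ≤ _ := Finset.sum_le_sum hpt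

/-- Pinsker's inequality, finite form. -/
lemma pinsker {ι : Type*} [Fintype ι] (p q : ι → ℝ)
    (hp0 : ∀ i, 0 ≤ p i) (hq0 : ∀ i, 0 ≤ q i)
    (hps : ∑ i, p i = 1) (hqs : ∑ i, q i = 1)
    (hsupp : ∀ i, q i = 0 → p i = 0) :
    (∑ i, |p i - q i|)^2/2 ≤ ∑ i, (p i * Real.log (p i) - p i * Real.log (q i)) := by
  set d := ∑ i, |p i - q i| with hd
  set S := ∑ i, ((p i - q i)^2/(p i + 2*q i)) with hS
  have hS0 : 0 ≤ S := Finset.sum_nonneg fun i _ =>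
    div_nonneg (sq_nonneg _) (by linarith [hp0 i, hq0 i])
  have key : 3/2 * S ≤ ∑ i, (p i * Real.log (p i) - p i * Real.log (q i)) := by
    have h1 : ∑ i, ((p i - q i) + 3/2 * ((p i - q i)^2/(p i + 2*q i))) ≤
        ∑ i, (p i * Real.log (p i) - p i * Real.log (q i)) :=
      Finset.sum_le_sum fun i _ => pointwise_kl (hp0 i) (hq0 i) (hsupp i)
    rw [Finset.sum_add_distrib, Finset.sum_sub_distrib, hps, hqs, ← Finset.mul_sum] at h1
    simpa using h1
  have hd0 : 0 ≤ d := Finset.sum_nonneg fun i _ => abs_nonneg _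
  rcases eq_or_lt_of_le hd0 with h0 | h0
  · have hz : (0:ℝ)^2/2 = 0 := by norm_num
    rw [← h0, hz]
    linarith
  -- main case
  have hmain : d^2/3 ≤ S := by
    set s : Finset ι := Finset.univ.filter (fun i => 0 < p i + 2*q i) with hs
    have hzero : ∀ i, i ∉ s → |p i - q i| = 0 := by
      intro i hi
      simp only [hs, Finset.mem_filter, Finset.mem_univ, true_and, not_lt] at hi
      have h1 : p i = 0 := le_antisymm (by linarith [hq0 i]) (hp0 i)
      have h2 : q i = 0 := le_antisymm (by linarith [hp0 i]) (hq0 i)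
      simp [h1, h2]
    have hds : ∑ i ∈ s, |p i - q i| = d :=
      Finset.sum_subset (Finset.subset_univ s) (fun i _ hi => hzero i hi)
    have hgs : ∀ i ∈ s, 0 < p i + 2*q i := by
      intro i hi
      simp only [hs, Finset.mem_filter] at hi
      exact hi.2
    have hsed := Finset.sq_sum_div_le_sum_sq_div s (fun i => |p i - q i|) hgs
    rw [hds] at hsed
    have habs : ∑ i ∈ s, |p i - q i|^2 / (p i + 2*q i)
        = ∑ i ∈ s, (p i - q i)^2 / (p i + 2*q i) := by
      simp [sq_abs]
    rw [habs] at hsed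
    have hsub : ∑ i ∈ s, (p i - q i)^2/(p i + 2*q i) ≤ S :=
      Finset.sum_le_sum_of_subset_of_nonneg (Finset.subset_univ s) fun i _ _ =>
        div_nonneg (sq_nonneg _) (by linarith [hp0 i, hq0 i])
    have hg3 : ∑ i ∈ s, (p i + 2*q i) ≤ 3 := by
      have h1 : ∑ i ∈ s, (p i + 2*q i) ≤ ∑ i, (p i + 2*q i) :=
        Finset.sum_le_sum_of_subset_of_nonneg (Finset.subset_univ s) fun i _ _ =>
          by linarith [hp0 i, hq0 i]
      have h2 : ∑ i, (p i + 2*q i) = 3 := by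
        rw [Finset.sum_add_distrib, hps, ← Finset.mul_sum, hqs]
        norm_num
      linarith
    have hgpos : 0 < ∑ i ∈ s, (p i + 2*q i) := by
      obtain ⟨i, hi⟩ : ∃ i, 0 < |p i - q i| := by
        by_contra hcon
        push_neg at hcon
        have : d ≤ 0 := Finset.sum_nonpos fun i _ => hcon i
        linarith
      have his : i ∈ s := by
        simp only [hs, Finset.mem_filter, Finset.mem_univ, true_and]
        rcases lt_or_ge 0 (p i + 2*q i) with h | h
        · exact h
        · have h1 : p i = 0 := le_antisymm (by linarith [hq0 i]) (hp0 i)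
          have h2 : q i = 0 := le_antisymm (by linarith [hp0 i]) (hq0 i)
          rw [h1, h2] at hi
          norm_num at hi
      calc (0:ℝ) < p i + 2*q i := hgs i his
        _ ≤ _ := Finset.single_le_sum (fun j hj => (hgs j hj).le) his
    calc d^2/3 ≤ d^2/(∑ i ∈ s, (p i + 2*q i)) := by gcongr
      _ ≤ _ := le_trans hsed hsub
  linarith

lemma entropy_mix {ι : Type*} [Fintype ι] (p q : ι → ℝ)
    (hp0 : ∀ i, 0 ≤ p i) (hq0 : ∀ i, 0 ≤ q i)
    (hps : ∑ i, p i = 1) (hqs : ∑ i, q i = 1)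
    {t : ℝ} (ht0 : 0 < t) (ht1 : t < 1) :
    (1-t) * (∑ i, Real.negMulLog (p i)) + t * (∑ i, Real.negMulLog (q i))
      + t*(1-t)*(∑ i, |p i - q i|)^2/2
    ≤ ∑ i, Real.negMulLog ((1-t)*p i + t*q i) := by
  set d := ∑ i, |p i - q i| with hd
  set m : ι → ℝ := fun i => (1-t)*p i + t*q i with hm
  have hm0 : ∀ i, 0 ≤ m i := fun i =>
    add_nonneg (mul_nonneg (by linarith) (hp0 i)) (mul_nonneg ht0.le (hq0 i))
  have hms : ∑ i, m i = 1 := by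
    simp only [hm, Finset.sum_add_distrib, ← Finset.mul_sum, hps, hqs]
    ring
  have hsuppp : ∀ i, m i = 0 → p i = 0 := by
    intro i h
    have h1 : 0 ≤ (1-t)*p i := mul_nonneg (by linarith) (hp0 i)
    have h2 : 0 ≤ t*q i := mul_nonneg ht0.le (hq0 i)
    have : (1-t)*p i = 0 := by simp only [hm] at h; linarith
    rcases mul_eq_zero.mp this with h' | h'
    · linarith
    · exact h'
  have hsuppq : ∀ i, m i = 0 → q i = 0 := by
    intro i h
    have h1 : 0 ≤ (1-t)*p i := mul_nonneg (by linarith) (hp0 i)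
    have h2 : 0 ≤ t*q i := mul_nonneg ht0.le (hq0 i)
    have : t*q i = 0 := by simp only [hm] at h; linarith
    rcases mul_eq_zero.mp this with h' | h'
    · linarith
    · exact h'
  have hdp : ∑ i, |p i - m i| = t * d := by
    rw [hd, Finset.mul_sum]
    refine Finset.sum_congr rfl fun i _ => ?_
    have : p i - m i = t * (p i - q i) := by simp only [hm]; ring
    rw [this, abs_mul, abs_of_pos ht0]
  have hdq : ∑ i, |q i - m i| = (1-t) * d := by
    rw [hd, Finset.mul_sum]
    refine Finset.sum_congr rfl fun i _ => ?_
    have : q i - m i = (1-t) * (q i - p i) := by simp only [hm]; ring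
    rw [this, abs_mul, abs_of_pos (by linarith : (0:ℝ) < 1-t), abs_sub_comm]
  have hKLp := pinsker p m hp0 hm0 hps hms hsuppp
  have hKLq := pinsker q m hq0 hm0 hqs hms hsuppq
  rw [hdp] at hKLp
  rw [hdq] at hKLq
  have hident : ∑ i, Real.negMulLog (m i) =
      (1-t) * (∑ i, Real.negMulLog (p i)) + t * (∑ i, Real.negMulLog (q i))
      + ((1-t) * (∑ i, (p i * Real.log (p i) - p i * Real.log (m i)))
         + t * (∑ i, (q i * Real.log (q i) - q i * Real.log (m i)))) := by
    simp only [Finset.mul_sum, ← Finset.sum_add_distrib]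
    refine Finset.sum_congr rfl fun i _ => ?_
    simp only [Real.negMulLog, hm]
    ring
  have e1 : (t*d)^2/2 = t^2 * (d^2/2) := by ring
  have e2 : ((1-t)*d)^2/2 = (1-t)^2 * (d^2/2) := by ring
  rw [e1] at hKLp
  rw [e2] at hKLq
  have h3 := mul_le_mul_of_nonneg_left hKLp (by linarith : (0:ℝ) ≤ 1-t)
  have h4 := mul_le_mul_of_nonneg_left hKLq ht0.le
  rw [hident]
  nlinarith [h3, h4, sq_nonneg d]

lemma negMulLog_add_le {x y : ℝ} (hx : 0 ≤ x) (hy : 0 ≤ y) :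
    Real.negMulLog (x+y) ≤ Real.negMulLog x + Real.negMulLog y := by
  rcases eq_or_lt_of_le hx with h | hx'
  · simp [← h]
  rcases eq_or_lt_of_le hy with h | hy'
  · simp [← h]
  simp only [Real.negMulLog, neg_mul]
  have h1 : Real.log x ≤ Real.log (x+y) := Real.log_le_log hx' (by linarith)
  have h2 : Real.log y ≤ Real.log (x+y) := Real.log_le_log hy' (by linarith)
  nlinarith [mul_le_mul_of_nonneg_left h1 hx'.le, mul_le_mul_of_nonneg_left h2 hy'.le]

lemma fannes {ι : Type*} [Fintype ι] (hcard : 2 ≤ Fintype.card ι)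
    (p q : ι → ℝ)
    (hp0 : ∀ i, 0 ≤ p i) (hq0 : ∀ i, 0 ≤ q i)
    (hps : ∑ i, p i = 1) (hqs : ∑ i, q i = 1) :
    ∑ i, Real.negMulLog (p i) - ∑ i, Real.negMulLog (q i) ≤
      ((∑ i, |p i - q i|)/2) * Real.log ((Fintype.card ι : ℝ) - 1)
      + Real.binEntropy ((∑ i, |p i - q i|)/2) := by
  classical
  set T := (∑ i, |p i - q i|)/2 with hT
  have hT0 : 0 ≤ T := by
    rw [hT]
    have : 0 ≤ ∑ i, |p i - q i| := Finset.sum_nonneg fun i _ => abs_nonneg _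
    linarith
  rcases eq_or_lt_of_le hT0 with hTz | hTpos
  · -- T = 0 : p = q
    have hz : ∀ i, |p i - q i| = 0 := by
      intro i
      have hsum : ∑ i, |p i - q i| = 0 := by rw [hT] at hTz; linarith
      exact (Finset.sum_eq_zero_iff_of_nonneg (fun i _ => abs_nonneg (p i - q i))).mp hsum i
        (Finset.mem_univ i)
    have hpq : p = q := by
      funext i
      have := abs_eq_zero.mp (hz i)
      linarith
    rw [hpq, ← hTz]
    simp [Real.binEntropy]
  -- main case
  set u : ι → ℝ := fun i => min (p i) (q i) with hu
  set a : ι → ℝ := fun i => p i - u i with ha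
  set b : ι → ℝ := fun i => q i - u i with hb
  have ha0 : ∀ i, 0 ≤ a i := fun i => by
    simp only [ha, hu, sub_nonneg]
    exact min_le_left _ _
  have hb0 : ∀ i, 0 ≤ b i := fun i => by
    simp only [hb, hu, sub_nonneg]
    exact min_le_right _ _
  have hu0 : ∀ i, 0 ≤ u i := fun i => le_min (hp0 i) (hq0 i)
  have hule_q : ∀ i, u i ≤ q i := fun i => min_le_right _ _
  have hble : ∀ i, b i ≤ q i := fun i => by
    simp only [hb]
    linarith [hu0 i]
  have habs : ∀ i, |p i - q i| = a i + b i := by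
    intro i
    rcases le_total (p i) (q i) with h | h
    · rw [abs_of_nonpos (by linarith)]
      simp only [ha, hb, hu, min_eq_left h]
      ring
    · rw [abs_of_nonneg (by linarith)]
      simp only [ha, hb, hu, min_eq_right h]
      ring
  have hsum_apb : ∑ i, a i + ∑ i, b i = 2*T := by
    rw [← Finset.sum_add_distrib]
    have h1 : ∑ i, (a i + b i) = ∑ i, |p i - q i| :=
      Finset.sum_congr rfl fun i _ => (habs i).symm
    rw [h1, hT]
    ring
  have hsum_amb : ∑ i, a i - ∑ i, b i = 0 := by
    rw [← Finset.sum_sub_distrib]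
    have h1 : ∑ i, (a i - b i) = ∑ i, (p i - q i) := by
      refine Finset.sum_congr rfl fun i _ => ?_
      simp only [ha, hb]
      ring
    rw [h1, Finset.sum_sub_distrib, hps, hqs]
    ring
  have hA : ∑ i, a i = T := by linarith
  have hB : ∑ i, b i = T := by linarith
  have hU : ∑ i, u i = 1 - T := by
    have h1 : ∑ i, u i = ∑ i, p i - ∑ i, a i := by
      rw [← Finset.sum_sub_distrib]
      refine Finset.sum_congr rfl fun i _ => ?_
      simp only [ha]
      ring
    rw [h1, hps, hA]
  -- upper bound on entropy of p
  have hupper : ∑ i, Real.negMulLog (p i) ≤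
      ∑ i, Real.negMulLog (u i) + ∑ i, Real.negMulLog (a i) := by
    rw [← Finset.sum_add_distrib]
    refine Finset.sum_le_sum fun i _ => ?_
    have hp : p i = u i + a i := by simp only [ha]; ring
    rw [hp]
    exact negMulLog_add_le (hu0 i) (ha0 i)
  -- lower bound on entropy of q
  have hlower : ∑ i, Real.negMulLog (u i) + ∑ i, Real.negMulLog (b i)
      - Real.binEntropy T ≤ ∑ i, Real.negMulLog (q i) := by
    have hident : ∑ i, Real.negMulLog (q i) =
        ∑ i, Real.negMulLog (u i) + ∑ i, Real.negMulLog (b i)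
        + ((∑ i, (u i * Real.log (u i) - u i * Real.log (q i)))
          + (∑ i, (b i * Real.log (b i) - b i * Real.log (q i)))) := by
      simp only [← Finset.sum_add_distrib]
      refine Finset.sum_congr rfl fun i _ => ?_
      have hq : q i = u i + b i := by simp only [hb]; ring
      simp only [Real.negMulLog]
      nth_rewrite 1 [hq]
      nth_rewrite 1 [hq]
      rw [hq]
      ring
    have hls1 := log_sum Finset.univ u q (fun i _ => hu0 i) (fun i _ => hq0 i)
      (fun i _ hqi => le_antisymm (hqi ▸ hule_q i) (hu0 i))
    have hls2 := log_sum Finset.univ b q (fun i _ => hb0 i) (fun i _ => hq0 i)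
      (fun i _ hqi => le_antisymm (hqi ▸ hble i) (hb0 i))
    rw [hU, hqs, div_one] at hls1
    rw [hB, hqs, div_one] at hls2
    have hbe : Real.binEntropy T = Real.negMulLog T + Real.negMulLog (1-T) :=
      Real.binEntropy_eq_negMulLog_add_negMulLog_one_sub T
    simp only [Real.negMulLog] at hbe
    rw [hident]
    linarith
  -- lower bound on sum negMulLog b
  have hbbound : Real.negMulLog T ≤ ∑ i, Real.negMulLog (b i) := by
    have hpt : ∀ i, -(b i * Real.log T) ≤ Real.negMulLog (b i) := by
      intro i
      rcases eq_or_lt_of_le (hb0 i) with h | h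
      · simp [← h]
      · have hbT : b i ≤ T := hB ▸ Finset.single_le_sum (fun j _ => hb0 j) (Finset.mem_univ i)
        have := Real.log_le_log h hbT
        simp only [Real.negMulLog, neg_mul]
        nlinarith
    have e : ∑ i, b i * Real.log T = T * Real.log T := by rw [← Finset.sum_mul, hB]
    calc Real.negMulLog T = -(T * Real.log T) := by simp [Real.negMulLog]
      _ = ∑ i, -(b i * Real.log T) := by rw [Finset.sum_neg_distrib, e]
      _ ≤ _ := Finset.sum_le_sum fun i _ => hpt i
  -- upper bound on sum negMulLog a
  have habound : ∑ i, Real.negMulLog (a i) ≤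
      T * Real.log ((Fintype.card ι : ℝ) - 1) + Real.negMulLog T := by
    obtain ⟨i₀, hbi₀⟩ : ∃ i, 0 < b i := by
      by_contra hcon
      push_neg at hcon
      have : T ≤ 0 := hB ▸ Finset.sum_nonpos fun i _ => hcon i
      linarith
    have hai₀ : a i₀ = 0 := by
      rcases le_total (p i₀) (q i₀) with h | h
      · simp only [ha, hu, min_eq_left h]
        ring
      · exfalso
        have : b i₀ = 0 := by simp only [hb, hu, min_eq_right h]; ring
        linarith
    set s : Finset ι := Finset.univ.erase i₀ with hsdef
    have hAs : ∑ i ∈ s, a i = T := by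
      rw [hsdef, Finset.sum_erase _ hai₀, hA]
    have hcards : (s.card : ℝ) = (Fintype.card ι : ℝ) - 1 := by
      rw [hsdef, Finset.card_erase_of_mem (Finset.mem_univ i₀), Finset.card_univ]
      have h1 : 1 ≤ Fintype.card ι := by omega
      push_cast [Nat.cast_sub h1]
      ring
    have hNr : (0:ℝ) < (Fintype.card ι : ℝ) - 1 := by
      have : (2:ℝ) ≤ (Fintype.card ι : ℝ) := by exact_mod_cast hcard
      linarith
    have hls := log_sum s a (fun _ => 1) (fun i _ => ha0 i) (fun i _ => zero_le_one)
      (fun i _ h1 => absurd h1 one_ne_zero)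
    rw [hAs] at hls
    have hsum1 : ∑ i ∈ s, (1:ℝ) = (Fintype.card ι : ℝ) - 1 := by
      rw [Finset.sum_const, nsmul_eq_mul, mul_one, hcards]
    rw [hsum1] at hls
    have hlog1 : ∀ i ∈ s, a i * Real.log (a i) - a i * Real.log 1 = a i * Real.log (a i) := by
      intro i _
      rw [Real.log_one, mul_zero, sub_zero]
    rw [Finset.sum_congr rfl hlog1] at hls
    have hldiv : Real.log (T / ((Fintype.card ι : ℝ) - 1)) =
        Real.log T - Real.log ((Fintype.card ι : ℝ) - 1) :=
      Real.log_div hTpos.ne' hNr.ne'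
    rw [hldiv] at hls
    have hsa : ∑ i, Real.negMulLog (a i) = ∑ i ∈ s, Real.negMulLog (a i) := by
      rw [hsdef]
      exact (Finset.sum_erase _ (by rw [hai₀]; exact Real.negMulLog_zero)).symm
    rw [hsa]
    have : ∑ i ∈ s, Real.negMulLog (a i) = -∑ i ∈ s, a i * Real.log (a i) := by
      rw [← Finset.sum_neg_distrib]
      exact Finset.sum_congr rfl fun i _ => by simp [Real.negMulLog]
    
    rw [this]
    simp only [Real.negMulLog, neg_mul]
    nlinarith [hls]
  -- combine
  have hbe : Real.binEntropy T = Real.negMulLog T + Real.negMulLog (1-T) :=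
    Real.binEntropy_eq_negMulLog_add_negMulLog_one_sub T
  linarith

lemma entropy_eq {m : ℕ} {n : Fin m → ℕ} (X : Tensor n) :
    entropy X = ∑ I : Idx n, Real.negMulLog (X I) := by
  rw [entropy, ← Finset.sum_neg_distrib]
  exact Finset.sum_congr rfl fun I _ => by simp [Real.negMulLog]

lemma abs_le_supAbs {ι : Type*} [Fintype ι] [Nonempty ι] (X : ι → ℝ) (i : ι) :
    |X i| ≤ supAbs X :=
  le_ciSup (f := fun i => |X i|) (Set.Finite.bddAbove (Set.finite_range _)) i

lemma supAbs_nonneg {ι : Type*} [Fintype ι] [Nonempty ι] (X : ι → ℝ) : 0 ≤ supAbs X :=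
  le_trans (abs_nonneg _) (abs_le_supAbs X (Classical.arbitrary ι))

lemma feasible_sum_one {m : ℕ} (hm : 2 ≤ m) {n : Fin m → ℕ}
    {r : ∀ k : Fin m, Fin (n k) → ℝ} (hr : ∀ k, IsSimplex (r k))
    {P : Tensor n} (hPF : Feasible r P) : ∑ I : Idx n, P I = 1 := by
  have hk : 0 < m := by omega
  set k₀ : Fin m := ⟨0, hk⟩
  have h1 : ∑ j, marginal P k₀ j = ∑ I : Idx n, P I := by
    unfold marginal
    rw [Finset.sum_comm]
    refine Finset.sum_congr rfl fun I _ => ?_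
    simp
  have h2 : ∑ j, marginal P k₀ j = 1 := by
    rw [Finset.sum_congr rfl fun j _ => hPF.2 k₀ j]
    exact (hr k₀).2
  linarith

lemma marginal_mix {m : ℕ} {n : Fin m → ℕ} (P Q : Tensor n) (t : ℝ) (k : Fin m)
    (j : Fin (n k)) :
    marginal (fun I => (1-t) * P I + t * Q I) k j
      = (1-t) * marginal P k j + t * marginal Q k j := by
  unfold marginal
  rw [Finset.mul_sum, Finset.mul_sum, ← Finset.sum_add_distrib]
  refine Finset.sum_congr rfl fun I _ => ?_
  split_ifs <;> ring

lemma tinner_mix {m : ℕ} {n : Fin m → ℕ} (C P Q : Tensor n) (t : ℝ) :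
    tinner C (fun I => (1-t) * P I + t * Q I) = (1-t) * tinner C P + t * tinner C Q := by
  unfold tinner
  rw [Finset.mul_sum, Finset.mul_sum, ← Finset.sum_add_distrib]
  exact Finset.sum_congr rfl fun I _ => by ring

lemma min_strong {m : ℕ} (hm : 2 ≤ m) {n : Fin m → ℕ} {η : ℝ} (hη : 0 < η)
    {r : ∀ k : Fin m, Fin (n k) → ℝ} (hr : ∀ k, IsSimplex (r k)) (C : Tensor n)
    {P Q : Tensor n} (hPF : Feasible r P) (hQF : Feasible r Q)
    (hmin : ∀ R : Tensor n, Feasible r R → entCost C η P ≤ entCost C η R) :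
    entCost C η P + η * (tnorm1 fun I => P I - Q I)^2/2 ≤ entCost C η Q := by
  set d := tnorm1 fun I => P I - Q I with hd
  have hPs := feasible_sum_one hm hr hPF
  have hQs := feasible_sum_one hm hr hQF
  have key : ∀ t : ℝ, 0 < t → t < 1 →
      entCost C η P + η*(1-t)*d^2/2 ≤ entCost C η Q := by
    intro t ht0 ht1
    set M : Tensor n := fun I => (1-t) * P I + t * Q I with hM
    have hMF : Feasible r M := by
      constructor
      · intro I
        exact add_nonneg (mul_nonneg (by linarith) (hPF.1 I)) (mul_nonneg ht0.le (hQF.1 I))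
      · intro k j
        rw [hM, marginal_mix P Q t k j, hPF.2 k j, hQF.2 k j]
        ring
    have hEnt := entropy_mix P Q hPF.1 hQF.1 hPs hQs ht0 ht1
    have hEnt2 : (1-t) * entropy P + t * entropy Q + t*(1-t)*d^2/2 ≤ entropy M := by
      rw [entropy_eq P, entropy_eq Q, hM, entropy_eq]
      simpa [hd, tnorm1] using hEnt
    have hti : tinner C M = (1-t) * tinner C P + t * tinner C Q := tinner_mix C P Q t
    have h1 : entCost C η P ≤ entCost C η M := hmin M hMF
    have h2 : entCost C η M ≤ (1-t) * entCost C η P + t * entCost C η Q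
        - η * (t*(1-t)*d^2/2) := by
      unfold entCost
      rw [hti]
      nlinarith [hEnt2]
    have h3 : t * (entCost C η P + η*(1-t)*d^2/2) ≤ t * entCost C η Q := by nlinarith [h1, h2]
    have := (mul_le_mul_iff_right₀ ht0).mp h3
    linarith
  have hlim : Filter.Tendsto (fun t : ℝ => entCost C η P + η*(1-t)*d^2/2)
      (nhdsWithin 0 (Set.Ioi 0)) (nhds (entCost C η P + η*(1-0)*d^2/2)) := by
    apply Filter.Tendsto.mono_left _ nhdsWithin_le_nhds
    exact Continuous.tendsto (by continuity) 0
  have hev : ∀ᶠ t in nhdsWithin (0:ℝ) (Set.Ioi 0),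
      entCost C η P + η*(1-t)*d^2/2 ≤ entCost C η Q := by
    have h1 : Set.Ioo (0:ℝ) 1 ∈ nhdsWithin (0:ℝ) (Set.Ioi 0) :=
      Ioo_mem_nhdsGT_of_mem (by norm_num)
    filter_upwards [h1] with t ht
    exact key t ht.1 ht.2
  have := le_of_tendsto hlim hev
  simpa using this


/-- bound for term `(eq:Term1)` in the proof of Theorem `thm:LowRankError`:
if `‖C − C̃‖_∞ ≤ η ε_log`, then the minimizers `P` and `P̃` of `V_C^η` and `V_{C̃}^η` over
`B(r_1,…,r_m)` satisfy `‖P − P̃‖₁ ≤ ε_log` and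
`|V_C^η(P) − V_C^η(P̃)| ≤ ε_log ‖C‖_∞ + η (ε_log log(2/ε_log) + (ε_log/2) log(∏ n_k − 1))`. -/
theorem perturbed_cost_minimizer_bound
    {m : ℕ} (hm : 2 ≤ m) {n : Fin m → ℕ} (hn : ∀ k, 2 ≤ n k)
    (η : ℝ) (hη : 0 < η)
    (r : ∀ k : Fin m, Fin (n k) → ℝ) (hr : ∀ k, IsSimplex (r k))
    (C Ct : Tensor n) (hC : ∀ I, 0 ≤ C I)
    (εlog : ℝ) (hεlog0 : 0 < εlog) (hεlog1 : εlog ≤ 1)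
    (hdiff : supAbs (fun I : Idx n => C I - Ct I) ≤ η * εlog)
    (P : Tensor n) (hPF : Feasible r P)
    (hPMin : ∀ Q : Tensor n, Feasible r Q → entCost C η P ≤ entCost C η Q)
    (Pt : Tensor n) (hPtF : Feasible r Pt)
    (hPtMin : ∀ Q : Tensor n, Feasible r Q → entCost Ct η Pt ≤ entCost Ct η Q) :
    tnorm1 (fun I => P I - Pt I) ≤ εlog ∧
    |entCost C η P - entCost C η Pt| ≤
      εlog * supAbs C
        + η * (εlog * Real.log (2 / εlog)
          + εlog / 2 * Real.log ((∏ k, (n k : ℝ)) - 1)) := by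
  classical
  haveI hne : Nonempty (Idx n) := ⟨fun k => ⟨0, by have := hn k; omega⟩⟩
  have hcard_eq : (Fintype.card (Idx n) : ℝ) = ∏ k, (n k : ℝ) := by
    rw [Fintype.card_pi]
    push_cast
    exact Finset.prod_congr rfl fun k _ => by rw [Fintype.card_fin]
  have hcard2 : 2 ≤ Fintype.card (Idx n) := by
    rw [Fintype.card_pi]
    have k₀ : Fin m := ⟨0, by omega⟩
    have h1 : ∀ k ∈ (Finset.univ : Finset (Fin m)), 1 ≤ Fintype.card (Fin (n k)) := by
      intro k _
      rw [Fintype.card_fin]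
      have := hn k
      omega
    calc 2 ≤ Fintype.card (Fin (n k₀)) := by rw [Fintype.card_fin]; exact hn k₀
      _ ≤ ∏ k, Fintype.card (Fin (n k)) := Finset.single_le_prod' h1 (Finset.mem_univ k₀)
  have hNr1 : (1:ℝ) ≤ (Fintype.card (Idx n) : ℝ) - 1 := by
    have : (2:ℝ) ≤ (Fintype.card (Idx n) : ℝ) := by exact_mod_cast hcard2
    linarith
  have hlogNr : 0 ≤ Real.log ((Fintype.card (Idx n) : ℝ) - 1) := Real.log_nonneg hNr1
  set d := tnorm1 fun I => P I - Pt I with hd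
  have hd0 : 0 ≤ d := Finset.sum_nonneg fun I _ => abs_nonneg _
  have hsym : (tnorm1 fun I => Pt I - P I) = d := by
    rw [hd]
    exact Finset.sum_congr rfl fun I _ => abs_sub_comm _ _
  have hPs := feasible_sum_one hm hr hPF
  have hPts := feasible_sum_one hm hr hPtF
  -- Part 1
  have key1 := min_strong hm hη hr C hPF hPtF hPMin
  have key2 := min_strong hm hη hr Ct hPtF hPF hPtMin
  rw [hsym] at key2
  have e1 : entCost C η Pt - entCost Ct η Pt = ∑ I : Idx n, (C I - Ct I) * Pt I := by
    have h : ∑ I : Idx n, C I * Pt I - ∑ I : Idx n, Ct I * Pt I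
        = ∑ I : Idx n, (C I - Ct I) * Pt I := by
      rw [← Finset.sum_sub_distrib]
      exact Finset.sum_congr rfl fun I _ => by ring
    unfold entCost tinner
    linarith [h]
  have e2 : entCost C η P - entCost Ct η P = ∑ I : Idx n, (C I - Ct I) * P I := by
    have h : ∑ I : Idx n, C I * P I - ∑ I : Idx n, Ct I * P I
        = ∑ I : Idx n, (C I - Ct I) * P I := by
      rw [← Finset.sum_sub_distrib]
      exact Finset.sum_congr rfl fun I _ => by ring
    unfold entCost tinner
    linarith [h]
  have e3 : ∑ I : Idx n, (C I - Ct I) * Pt I - ∑ I : Idx n, (C I - Ct I) * P I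
      = ∑ I : Idx n, (C I - Ct I) * (Pt I - P I) := by
    rw [← Finset.sum_sub_distrib]
    exact Finset.sum_congr rfl fun I _ => by ring
  have hb : ∑ I : Idx n, (C I - Ct I) * (Pt I - P I) ≤ η * εlog * d := by
    calc ∑ I : Idx n, (C I - Ct I) * (Pt I - P I)
        ≤ ∑ I : Idx n, (η * εlog) * |Pt I - P I| := by
          refine Finset.sum_le_sum fun I _ => ?_
          calc (C I - Ct I) * (Pt I - P I) ≤ |(C I - Ct I) * (Pt I - P I)| := le_abs_self _
            _ = |C I - Ct I| * |Pt I - P I| := abs_mul _ _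
            _ ≤ (η * εlog) * |Pt I - P I| := by
                refine mul_le_mul_of_nonneg_right ?_ (abs_nonneg _)
                exact le_trans (abs_le_supAbs (fun I => C I - Ct I) I) hdiff
      _ = η * εlog * d := by
          rw [← Finset.mul_sum, ← hsym]
          rfl
  have htot : η * d^2 ≤ η * εlog * d := by
    rw [← hd] at key1
    nlinarith [key1, key2, hb, e1, e2, e3]
  have hd_le : d ≤ εlog := by
    rcases eq_or_lt_of_le hd0 with h | h
    · linarith
    · nlinarith [htot, mul_pos hη h]
  refine ⟨hd_le, ?_⟩
  -- Part 2
  have hmin' : entCost C η P ≤ entCost C η Pt := hPMin Pt hPtF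
  rw [abs_of_nonpos (by linarith), neg_sub]
  have e4 : tinner C Pt - tinner C P = ∑ I : Idx n, C I * (Pt I - P I) := by
    unfold tinner
    rw [← Finset.sum_sub_distrib]
    exact Finset.sum_congr rfl fun I _ => by ring
  have bound1 : ∑ I : Idx n, C I * (Pt I - P I) ≤ εlog * supAbs C := by
    have hsupnn : 0 ≤ supAbs C := supAbs_nonneg C
    calc ∑ I : Idx n, C I * (Pt I - P I)
        ≤ ∑ I : Idx n, supAbs C * |Pt I - P I| := by
          refine Finset.sum_le_sum fun I _ => ?_
          calc C I * (Pt I - P I) ≤ |C I * (Pt I - P I)| := le_abs_self _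
            _ = |C I| * |Pt I - P I| := abs_mul _ _
            _ ≤ supAbs C * |Pt I - P I| :=
                mul_le_mul_of_nonneg_right (abs_le_supAbs C I) (abs_nonneg _)
      _ = supAbs C * d := by
          rw [← Finset.mul_sum, ← hsym]
          rfl
      _ ≤ supAbs C * εlog := mul_le_mul_of_nonneg_left hd_le hsupnn
      _ = εlog * supAbs C := mul_comm _ _
  -- entropy bound
  have hf := fannes hcard2 P Pt hPF.1 hPtF.1 hPs hPts
  have hTd : (∑ I : Idx n, |P I - Pt I|)/2 = d/2 := by rw [hd]; rfl
  rw [hTd] at hf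
  have hfent : entropy P - entropy Pt ≤
      (d/2) * Real.log ((Fintype.card (Idx n) : ℝ) - 1) + Real.binEntropy (d/2) := by
    rw [entropy_eq P, entropy_eq Pt]
    exact hf
  have hT2 : d/2 ≤ εlog/2 := by linarith
  have hhalf : εlog/2 ≤ 1/2 := by linarith
  have step1 : (d/2) * Real.log ((Fintype.card (Idx n) : ℝ) - 1)
      ≤ (εlog/2) * Real.log ((Fintype.card (Idx n) : ℝ) - 1) :=
    mul_le_mul_of_nonneg_right hT2 hlogNr
  have step2 : Real.binEntropy (d/2) ≤ Real.binEntropy (εlog/2) := by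
    refine Real.binEntropy_strictMonoOn.monotoneOn ?_ ?_ hT2
    · constructor
      · linarith
      · rw [show (2:ℝ)⁻¹ = 1/2 by norm_num]; linarith
    · constructor
      · linarith
      · rw [show (2:ℝ)⁻¹ = 1/2 by norm_num]; linarith
  have step3 : Real.binEntropy (εlog/2) ≤ εlog * Real.log (2/εlog) := by
    rw [Real.binEntropy_eq_negMulLog_add_negMulLog_one_sub]
    have h1 : Real.negMulLog (1 - εlog/2) ≤ Real.negMulLog (εlog/2) := by
      have := mul_log_le_half (by linarith : (0:ℝ) ≤ εlog/2) hhalf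
      simp only [Real.negMulLog, neg_mul]
      linarith
    have h2 : Real.negMulLog (εlog/2) = (εlog/2) * Real.log (2/εlog) := by
      simp only [Real.negMulLog, neg_mul]
      rw [Real.log_div (by norm_num) hεlog0.ne', Real.log_div (ne_of_gt hεlog0) (by norm_num)]
      ring
    have h2' : Real.negMulLog (εlog/2) = (εlog/2) * Real.log (2/εlog) := h2
    calc Real.negMulLog (εlog/2) + Real.negMulLog (1 - εlog/2)
        ≤ 2 * Real.negMulLog (εlog/2) := by linarith
      _ = εlog * Real.log (2/εlog) := by rw [h2]; ring
  have hentbound : entropy P - entropy Pt ≤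
      εlog * Real.log (2/εlog) + εlog/2 * Real.log ((∏ k, (n k : ℝ)) - 1) := by
    rw [← hcard_eq]
    calc entropy P - entropy Pt
        ≤ (d/2) * Real.log ((Fintype.card (Idx n) : ℝ) - 1) + Real.binEntropy (d/2) := hfent
      _ ≤ (εlog/2) * Real.log ((Fintype.card (Idx n) : ℝ) - 1) + εlog * Real.log (2/εlog) := by
          linarith [step1, step2, step3]
      _ = εlog * Real.log (2/εlog) + εlog/2 * Real.log ((Fintype.card (Idx n) : ℝ) - 1) := by
          ring
  have hfinal : entCost C η Pt - entCost C η P =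
      (tinner C Pt - tinner C P) + η * (entropy P - entropy Pt) := by
    unfold entCost
    ring
  rw [hfinal, e4]
  have := mul_le_mul_of_nonneg_left hentbound hη.le
  linarith

end MOT
end

section
/- Let C ∈ ℝ^{n_1×⋯×n_m} be an entrywise nonnegative cost tensor, η > 0, and r_k ∈ Δ^{n_k} for k = 1,…,m. Let P_η be a minimizer of V_C^η over B(r_1,…,r_m) and let P* be a minimizer of ⟨C, ·⟩ over B(r_1,…,r_m). Then ⟨C, P_η⟩ − ⟨C, P*⟩ ≤ η ( H(P_η) − H(P*) ) ≤ η Σ_{k=1}^m log(n_k). -/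
open Finset

namespace MOT


lemma sum_eq_one_of_feasible {m : ℕ} (hm : 2 ≤ m) {n : Fin m → ℕ}
    (r : ∀ k : Fin m, Fin (n k) → ℝ) (hr : ∀ k, IsSimplex (r k))
    (P : Tensor n) (hP : Feasible r P) : ∑ I : Idx n, P I = 1 := by
  have k : Fin m := ⟨0, by omega⟩
  have h1 : ∑ j : Fin (n k), marginal P k j = 1 := by
    simp only [hP.2 k]; exact (hr k).2
  rw [← h1]
  unfold marginal
  rw [Finset.sum_comm]
  congr 1
  ext I
  simp

lemma entropy_nonneg_of_feasible {m : ℕ} (hm : 2 ≤ m) {n : Fin m → ℕ}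
    (r : ∀ k : Fin m, Fin (n k) → ℝ) (hr : ∀ k, IsSimplex (r k))
    (P : Tensor n) (hP : Feasible r P) : 0 ≤ entropy P := by
  have hsum := sum_eq_one_of_feasible hm r hr P hP
  unfold entropy
  rw [neg_nonneg]
  apply Finset.sum_nonpos
  intro I _
  have hle1 : P I ≤ 1 := by
    rw [← hsum]
    exact Finset.single_le_sum (fun J _ => hP.1 J) (Finset.mem_univ I)
  exact Real.mul_log_nonpos (hP.1 I) hle1

lemma entropy_le_of_feasible {m : ℕ} (hm : 2 ≤ m) {n : Fin m → ℕ}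
    (r : ∀ k : Fin m, Fin (n k) → ℝ) (hr : ∀ k, IsSimplex (r k))
    (P : Tensor n) (hP : Feasible r P) :
    entropy P ≤ ∑ k, Real.log (n k : ℝ) := by
  have hnk : ∀ k, 0 < n k := by
    intro k
    by_contra h
    have hnk0 : n k = 0 := by omega
    have h2 := (hr k).2
    have h3 : ∑ j : Fin (n k), r k j = 0 := by
      apply Finset.sum_eq_zero
      intro j _
      exact absurd j.2 (by omega)
    rw [h3] at h2
    norm_num at h2
  have hsum := sum_eq_one_of_feasible hm r hr P hP
  set N : ℕ := Fintype.card (Idx n) with hN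
  have hNpos : 0 < N := by
    rw [hN]
    apply Fintype.card_pos_iff.mpr
    exact ⟨fun k => ⟨0, hnk k⟩⟩
  have hNR : (0:ℝ) < N := by exact_mod_cast hNpos
  have key : ∀ I : Idx n, -(P I * Real.log (P I)) ≤ P I * Real.log N + (1/N - P I) := by
    intro I
    rcases eq_or_lt_of_le (hP.1 I) with h0 | hpos
    · rw [← h0]
      have h1 : (0:ℝ) ≤ 1/N := by positivity
      simpa using h1
    · have hx : (0:ℝ) < 1 / (N * P I) := by positivity
      have hlog := Real.log_le_sub_one_of_pos hx
      have hmul := mul_le_mul_of_nonneg_left hlog (le_of_lt hpos)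
      have heq1 : P I * Real.log (1 / (N * P I)) = -(P I * Real.log (P I)) - P I * Real.log N := by
        rw [Real.log_div one_ne_zero (by positivity), Real.log_one,
          Real.log_mul (ne_of_gt hNR) (ne_of_gt hpos)]
        ring
      have heq2 : P I * (1 / (N * P I) - 1) = 1/N - P I := by
        field_simp
      rw [heq1, heq2] at hmul
      linarith
  have hsum2 : entropy P ≤ Real.log N := by
    unfold entropy
    have h1 : -∑ I : Idx n, P I * Real.log (P I) = ∑ I : Idx n, -(P I * Real.log (P I)) := by
      rw [Finset.sum_neg_distrib]
    rw [h1]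
    calc ∑ I : Idx n, -(P I * Real.log (P I))
        ≤ ∑ I : Idx n, (P I * Real.log N + (1/N - P I)) :=
          Finset.sum_le_sum (fun I _ => key I)
      _ = Real.log N := by
          rw [Finset.sum_add_distrib, ← Finset.sum_mul, hsum, Finset.sum_sub_distrib, hsum]
          simp [Finset.card_univ, ← hN]
          field_simp
          norm_num
  have hNlog : Real.log N = ∑ k, Real.log (n k : ℝ) := by
    have : (N:ℝ) = ∏ k, (n k : ℝ) := by
      rw [hN, Fintype.card_pi]
      push_cast
      simp
    rw [this, Real.log_prod]
    intro k _
    exact_mod_cast (hnk k).ne'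
  linarith [hsum2, hNlog.le, hNlog.ge]



/-- inequality `(eq:thm2boundetastarstar)` in the proof of Theorem
`thm:EpsAccurateApprox`: the entropic minimizer `P_η` and the unregularized minimizer `P*`
satisfy `⟨C, P_η⟩ − ⟨C, P*⟩ ≤ η (H(P_η) − H(P*)) ≤ η ∑_k log n_k`. -/
theorem entropic_minimizer_cost_gap
    {m : ℕ} (hm : 2 ≤ m) {n : Fin m → ℕ}
    (C : Tensor n) (hC : ∀ I, 0 ≤ C I)
    (η : ℝ) (hη : 0 < η)
    (r : ∀ k : Fin m, Fin (n k) → ℝ) (hr : ∀ k, IsSimplex (r k))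
    (Pη : Tensor n) (hPηF : Feasible r Pη)
    (hPηMin : ∀ Q : Tensor n, Feasible r Q → entCost C η Pη ≤ entCost C η Q)
    (Pstar : Tensor n) (hPstarF : Feasible r Pstar)
    (hPstarMin : ∀ Q : Tensor n, Feasible r Q → tinner C Pstar ≤ tinner C Q) :
    tinner C Pη - tinner C Pstar ≤ η * (entropy Pη - entropy Pstar) ∧
    η * (entropy Pη - entropy Pstar) ≤ η * ∑ k, Real.log (n k : ℝ) := by
  constructor
  · have h := hPηMin Pstar hPstarF
    unfold entCost at h
    linarith
  · have h1 := entropy_le_of_feasible hm r hr Pη hPηF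
    have h2 := entropy_nonneg_of_feasible hm r hr Pstar hPstarF
    have : entropy Pη - entropy Pstar ≤ ∑ k, Real.log (n k : ℝ) := by linarith
    exact mul_le_mul_of_nonneg_left this hη.le


end MOT
end
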